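/- Let q, X, Y be complex numbers with |q| < 1, |X| < 1 and |Y| < 1. Then Σ_{r≥0} Σ_{s≥0} q^{rs} X^r Y^s / ((q;q)_r (q;q)_s) = ∏_{m≥0} (1 − q^m XY) / ((1 − q^m X)(1 − q^m Y)); both the double series and the infinite product converge absolutely. -/

import Mathlib

open Finset Filter Topology

namespace QC

/-- The finite q-Pochhammer-type product `∏_{k<n} (1 - a q^k)`. -/
def P (q a : ℂ) (n : ℕ) : ℂ := ∏ k ∈ Finset.range n, (1 - a * q ^ k)

lemma one_sub_ne {w : ℂ} (h : ‖w‖ < 1) : 1 - w ≠ 0 := by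
  intro h0
  have : w = 1 := by linear_combination -h0
  rw [this] at h; simp at h

lemma norm_one_sub_ge {w : ℂ} : 1 - ‖w‖ ≤ ‖1 - w‖ := by
  calc 1 - ‖w‖ = ‖(1:ℂ)‖ - ‖w‖ := by simp
    _ ≤ ‖1 - w‖ := norm_sub_norm_le _ _

/-- Lower bound for products of `(1 - x k)`. -/
lemma prod_one_sub_lb {x : ℕ → ℝ} {c T : ℝ} (hc : c < 1) (hx0 : ∀ k, 0 ≤ x k)
    (hxc : ∀ k, x k ≤ c) (hT : ∀ n, ∑ k ∈ range n, x k ≤ T) (n : ℕ) :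
    Real.exp (-T / (1 - c)) ≤ ∏ k ∈ range n, (1 - x k) := by
  have h1c : (0:ℝ) < 1 - c := by linarith
  have key : ∀ n, Real.exp (-(∑ k ∈ range n, x k) / (1 - c)) ≤ ∏ k ∈ range n, (1 - x k) := by
    intro n
    induction n with
    | zero => simp
    | succ n ih =>
      rw [Finset.sum_range_succ, Finset.prod_range_succ]
      have hxk : (0:ℝ) < 1 - x n := by have := hxc n; linarith
      have hlog : -(x n) / (1 - c) ≤ Real.log (1 - x n) := by
        have h2 : Real.log (1 - x n)⁻¹ ≤ (1 - x n)⁻¹ - 1 :=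
          Real.log_le_sub_one_of_pos (by positivity)
        rw [Real.log_inv] at h2
        have h3 : -Real.log (1 - x n) ≤ x n / (1 - x n) := by
          have : (1 - x n)⁻¹ - 1 = x n / (1 - x n) := by field_simp; ring
          linarith [this ▸ h2]
        have h4 : x n / (1 - x n) ≤ x n / (1 - c) :=
          div_le_div_of_nonneg_left (hx0 n) h1c (by linarith [hxc n]) |>.trans_eq rfl
        have : -Real.log (1 - x n) ≤ x n / (1 - c) := h3.trans h4
        rw [neg_div]; linarith
      have hstep : Real.exp (-(x n) / (1 - c)) ≤ 1 - x n := by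
        calc Real.exp (-(x n) / (1 - c)) ≤ Real.exp (Real.log (1 - x n)) :=
              Real.exp_le_exp.mpr hlog
          _ = 1 - x n := Real.exp_log hxk
      calc Real.exp (-(∑ k ∈ range n, x k + x n) / (1 - c))
          = Real.exp (-(∑ k ∈ range n, x k) / (1 - c)) * Real.exp (-(x n) / (1 - c)) := by
            rw [← Real.exp_add]; ring_nf
        _ ≤ (∏ k ∈ range n, (1 - x k)) * (1 - x n) := by
            apply mul_le_mul ih hstep (Real.exp_pos _).le
            exact le_trans (Real.exp_pos _).le ih
  refine le_trans ?_ (key n)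
  apply Real.exp_le_exp.mpr
  have := hT n
  gcongr


lemma norm_qpow_lt {q : ℂ} (hq : ‖q‖ < 1) (k : ℕ) : ‖q * q ^ k‖ < 1 := by
  rw [norm_mul, norm_pow]
  calc ‖q‖ * ‖q‖ ^ k ≤ ‖q‖ * 1 :=
        mul_le_mul_of_nonneg_left (pow_le_one₀ (norm_nonneg q) hq.le) (norm_nonneg q)
    _ < 1 := by rwa [mul_one]

lemma P_ne_zero {q : ℂ} (hq : ‖q‖ < 1) (n : ℕ) : P q q n ≠ 0 := by
  rw [P]
  exact Finset.prod_ne_zero_iff.mpr fun k _ => one_sub_ne (norm_qpow_lt hq k)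

/-- Uniform lower bound on `‖(q;q)_n‖`. -/
lemma P_lb {q : ℂ} (hq : ‖q‖ < 1) :
    ∃ C : ℝ, 0 < C ∧ ∀ n, C ≤ ‖P q q n‖ := by
  set c := ‖q‖ with hc
  have hc0 : 0 ≤ c := norm_nonneg q
  refine ⟨Real.exp (-(∑' k : ℕ, c * c ^ k) / (1 - c)), Real.exp_pos _, fun n => ?_⟩
  have hsum : Summable (fun k : ℕ => c * c ^ k) :=
    (summable_geometric_of_lt_one hc0 hq).mul_left c
  have h1 : Real.exp (-(∑' k : ℕ, c * c ^ k) / (1 - c)) ≤ ∏ k ∈ range n, (1 - c * c ^ k) := by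
    apply prod_one_sub_lb hq (fun k => by positivity) (fun k => ?_)
      (fun n => Summable.sum_le_tsum _ (fun k _ => by positivity) hsum) n
    calc c * c ^ k ≤ c * 1 := mul_le_mul_of_nonneg_left (pow_le_one₀ hc0 hq.le) hc0
      _ = c := mul_one c
  refine h1.trans ?_
  rw [P, norm_prod]
  apply Finset.prod_le_prod (fun k _ => by nlinarith [norm_qpow_lt hq k, norm_mul q (q^k), norm_pow q k]) (fun k _ => ?_)
  calc 1 - c * c ^ k = 1 - ‖q * q ^ k‖ := by rw [norm_mul, norm_pow]
    _ ≤ ‖1 - q * q ^ k‖ := norm_one_sub_ge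

/-- Uniform upper bound on the coefficients `(a;q)_n / (q;q)_n`. -/
lemma coeff_bound {q : ℂ} (hq : ‖q‖ < 1) (a : ℂ) :
    ∃ C : ℝ, 0 < C ∧ ∀ n, ‖P q a n / P q q n‖ ≤ C := by
  obtain ⟨D, hD0, hD⟩ := P_lb hq
  have hc0 : (0:ℝ) ≤ ‖q‖ := norm_nonneg q
  set B := Real.exp (‖a‖ * (1 - ‖q‖)⁻¹) with hB
  have hub : ∀ n, ‖P q a n‖ ≤ B := by
    intro n
    have hsum : Summable (fun k : ℕ => ‖a‖ * ‖q‖ ^ k) :=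
      (summable_geometric_of_lt_one hc0 hq).mul_left _
    calc ‖P q a n‖ = ∏ k ∈ range n, ‖1 - a * q ^ k‖ := by rw [P, norm_prod]
      _ ≤ ∏ k ∈ range n, Real.exp (‖a‖ * ‖q‖ ^ k) := by
          apply Finset.prod_le_prod (fun k _ => norm_nonneg _) (fun k _ => ?_)
          calc ‖1 - a * q ^ k‖ ≤ ‖(1:ℂ)‖ + ‖a * q ^ k‖ := norm_sub_le _ _
            _ = 1 + ‖a‖ * ‖q‖ ^ k := by rw [norm_one, norm_mul, norm_pow]
            _ ≤ Real.exp (‖a‖ * ‖q‖ ^ k) := by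
                have := Real.add_one_le_exp (‖a‖ * ‖q‖ ^ k); linarith
      _ = Real.exp (∑ k ∈ range n, ‖a‖ * ‖q‖ ^ k) := by rw [Real.exp_sum]
      _ ≤ B := by
          rw [hB]
          apply Real.exp_le_exp.mpr
          calc ∑ k ∈ range n, ‖a‖ * ‖q‖ ^ k ≤ ∑' k : ℕ, ‖a‖ * ‖q‖ ^ k :=
                Summable.sum_le_tsum _ (fun k _ => by positivity) hsum
            _ = ‖a‖ * (1 - ‖q‖)⁻¹ := by
                rw [tsum_mul_left, tsum_geometric_of_lt_one hc0 hq]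
  refine ⟨B / D, by positivity, fun n => ?_⟩
  rw [norm_div]
  apply div_le_div₀ (by positivity) (hub n) hD0 (hD n)


/-- The q-binomial theorem (Cauchy):
`Σ_n (a;q)_n/(q;q)_n z^n = Π_m (1 - a z q^m)/(1 - z q^m)`. -/
theorem qbinom {q a z : ℂ} (hq : ‖q‖ < 1) (hz : ‖z‖ < 1) (haz : ‖a * z‖ < 1) :
    Multipliable (fun m : ℕ => (1 - a * z * q ^ m) / (1 - z * q ^ m)) ∧
    HasSum (fun n : ℕ => P q a n / P q q n * z ^ n)
      (∏' m : ℕ, (1 - a * z * q ^ m) / (1 - z * q ^ m)) := by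
  obtain ⟨C, hC0, hC⟩ := coeff_bound hq a
  set c : ℕ → ℂ := fun n => P q a n / P q q n with hcdef
  -- summability of the power series at any point in the unit disc
  have hsum : ∀ w : ℂ, ‖w‖ < 1 → Summable (fun n => ‖c n * w ^ n‖) := by
    intro w hw
    apply Summable.of_nonneg_of_le (fun n => norm_nonneg _) (fun n => ?_)
      (((summable_geometric_of_lt_one (norm_nonneg w) hw)).mul_left C)
    rw [norm_mul, norm_pow]
    exact mul_le_mul_of_nonneg_right (hC n) (by positivity)
  set f : ℂ → ℂ := fun w => ∑' n, c n * w ^ n with hfdef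
  have hc0 : c 0 = 1 := by simp [hcdef, P]
  have hrec : ∀ n, c (n + 1) * (1 - q * q ^ n) = c n * (1 - a * q ^ n) := by
    intro n
    have h1 : (1 - q * q ^ n) ≠ 0 := one_sub_ne (norm_qpow_lt hq n)
    have h2 : (∏ x ∈ range n, (1 - q * q ^ x)) ≠ 0 := by
      simpa [P] using P_ne_zero hq n
    simp only [hcdef, P, Finset.prod_range_succ]
    have h1' : 1 - q ^ n * q ≠ 0 := by rwa [mul_comm]
    field_simp
  -- functional equation
  have funEq : ∀ w : ℂ, ‖w‖ < 1 → (1 - w) * f w = (1 - a * w) * f (q * w) := by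
    intro w hw
    have hqw : ‖q * w‖ < 1 := by
      rw [norm_mul]
      calc ‖q‖ * ‖w‖ ≤ 1 * ‖w‖ := mul_le_mul_of_nonneg_right hq.le (norm_nonneg w)
        _ = ‖w‖ := one_mul _
        _ < 1 := hw
    have S1 := (hsum w hw).of_norm
    have S2 := (hsum (q * w) hqw).of_norm
    have key : ∑' n, (c n * w ^ n - c n * (q * w) ^ n)
        = ∑' n, (c n * w ^ n * w - a * w * (c n * (q * w) ^ n)) := by
      rw [Summable.tsum_eq_zero_add (S1.sub S2)]
      simp only [pow_zero, mul_one, sub_self, zero_add]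
      refine tsum_congr fun n => ?_
      linear_combination (w ^ (n + 1)) * hrec n
    have e1 : ∑' n, (c n * w ^ n - c n * (q * w) ^ n) = f w - f (q * w) := Summable.tsum_sub S1 S2
    have e2 : ∑' n, (c n * w ^ n * w - a * w * (c n * (q * w) ^ n))
        = f w * w - a * w * f (q * w) := by
      rw [Summable.tsum_sub (S1.mul_right w) (S2.mul_left (a * w)), tsum_mul_right, tsum_mul_left]
    rw [e1, e2] at key
    linear_combination key
  -- iterating the functional equation
  have hqnz : ∀ n : ℕ, ‖q ^ n * z‖ < 1 := by
    intro n
    rw [norm_mul, norm_pow]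
    calc ‖q‖ ^ n * ‖z‖ ≤ 1 * ‖z‖ :=
          mul_le_mul_of_nonneg_right (pow_le_one₀ (norm_nonneg q) hq.le) (norm_nonneg z)
      _ = ‖z‖ := one_mul _
      _ < 1 := hz
    -- nonvanishing of the denominators
  have hzq : ∀ m : ℕ, ‖z * q ^ m‖ < 1 := by
    intro m
    rw [mul_comm]; exact hqnz m
  have hne2 : ∀ m : ℕ, (1 - z * q ^ m) ≠ 0 := fun m => one_sub_ne (hzq m)
  have hazq : ∀ m : ℕ, ‖a * z * q ^ m‖ < 1 := by
    intro m
    rw [norm_mul, norm_pow]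
    calc ‖a * z‖ * ‖q‖ ^ m ≤ ‖a * z‖ * 1 :=
          mul_le_mul_of_nonneg_left (pow_le_one₀ (norm_nonneg q) hq.le) (norm_nonneg _)
      _ = ‖a * z‖ := mul_one _
      _ < 1 := haz
  have hne3 : ∀ m : ℕ, (1 - a * z * q ^ m) ≠ 0 := fun m => one_sub_ne (hazq m)
  have iterEq : ∀ n : ℕ,
      f z = (∏ m ∈ range n, ((1 - a * z * q ^ m) / (1 - z * q ^ m))) * f (q ^ n * z) := by
    intro n
    induction n with
    | zero => simp
    | succ n ih =>
      rw [ih, Finset.prod_range_succ]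
      have h := funEq (q ^ n * z) (hqnz n)
      have harg : q * (q ^ n * z) = q ^ (n + 1) * z := by ring
      rw [harg] at h
      have hstep : f (q ^ n * z)
          = (1 - a * z * q ^ n) / (1 - z * q ^ n) * f (q ^ (n + 1) * z) := by
        rw [div_mul_eq_mul_div, eq_div_iff (hne2 n)]
        linear_combination h
      rw [hstep]; ring
  -- the tail tends to 1
  have hfz1 : ∀ w : ℂ, ‖w‖ ≤ ‖z‖ → ‖f w - 1‖ ≤ C * (1 - ‖z‖)⁻¹ * ‖w‖ := by
    intro w hw
    have hw1 : ‖w‖ < 1 := lt_of_le_of_lt hw hz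
    have S := (hsum w hw1).of_norm
    have h0 : f w - 1 = ∑' n, c (n + 1) * w ^ (n + 1) := by
      have := Summable.tsum_eq_zero_add S
      simp only [pow_zero, mul_one, hc0] at this
      simp only [hfdef]
      rw [this]; ring
    rw [h0]
    have hb : ∀ n : ℕ, ‖c (n + 1) * w ^ (n + 1)‖ ≤ (C * ‖w‖) * ‖z‖ ^ n := by
      intro n
      rw [norm_mul, norm_pow, pow_succ]
      calc ‖c (n + 1)‖ * (‖w‖ ^ n * ‖w‖) ≤ C * (‖z‖ ^ n * ‖w‖) := by
            apply mul_le_mul (hC _) ?_ (by positivity) hC0.le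
            exact mul_le_mul_of_nonneg_right (pow_le_pow_left₀ (norm_nonneg _) hw n)
              (norm_nonneg _)
        _ = (C * ‖w‖) * ‖z‖ ^ n := by ring
    have hgeo : Summable (fun n : ℕ => (C * ‖w‖) * ‖z‖ ^ n) :=
      (summable_geometric_of_lt_one (norm_nonneg z) hz).mul_left _
    have hnsum : Summable (fun n : ℕ => ‖c (n + 1) * w ^ (n + 1)‖) :=
      Summable.of_nonneg_of_le (fun n => norm_nonneg _) hb hgeo
    calc ‖∑' n, c (n + 1) * w ^ (n + 1)‖ ≤ ∑' n, ‖c (n + 1) * w ^ (n + 1)‖ :=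
          norm_tsum_le_tsum_norm hnsum
      _ ≤ ∑' n : ℕ, (C * ‖w‖) * ‖z‖ ^ n := Summable.tsum_le_tsum hb hnsum hgeo
      _ = (C * ‖w‖) * (1 - ‖z‖)⁻¹ := by
          rw [tsum_mul_left, tsum_geometric_of_lt_one (norm_nonneg z) hz]
      _ = C * (1 - ‖z‖)⁻¹ * ‖w‖ := by ring
  have hlim : Tendsto (fun n : ℕ => f (q ^ n * z)) atTop (𝓝 1) := by
    have h1 : Tendsto (fun n : ℕ => f (q ^ n * z) - 1) atTop (𝓝 0) := by
      rw [tendsto_zero_iff_norm_tendsto_zero]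
      have h2 : Tendsto (fun n : ℕ => C * (1 - ‖z‖)⁻¹ * ‖q ^ n * z‖) atTop (𝓝 0) := by
        have h3 := (tendsto_pow_atTop_nhds_zero_of_lt_one (norm_nonneg q)
          hq).const_mul (C * (1 - ‖z‖)⁻¹ * ‖z‖)
        rw [mul_zero] at h3
        refine h3.congr fun n => ?_
        rw [norm_mul, norm_pow]; ring
      apply squeeze_zero (fun n => norm_nonneg _) (fun n => ?_) h2
      apply hfz1
      rw [norm_mul, norm_pow]
      calc ‖q‖ ^ n * ‖z‖ ≤ 1 * ‖z‖ :=
            mul_le_mul_of_nonneg_right (pow_le_one₀ (norm_nonneg q) hq.le) (norm_nonneg z)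
        _ = ‖z‖ := one_mul _
    have h4 := h1.add (tendsto_const_nhds (x := (1:ℂ)))
    simpa using h4
  set r : ℕ → ℂ := fun m => (1 - a * z * q ^ m) / (1 - z * q ^ m) with hrdef
  have hPT : Tendsto (fun n : ℕ => ∏ m ∈ range n, r m) atTop (𝓝 (f z)) := by
    have h1 : Tendsto (fun n : ℕ => f z * (f (q ^ n * z))⁻¹) atTop (𝓝 (f z)) := by
      have := (tendsto_const_nhds (x := f z)).mul (hlim.inv₀ one_ne_zero)
      simpa using this
    refine h1.congr' ?_
    filter_upwards [hlim.eventually_ne one_ne_zero] with n h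
    rw [iterEq n]
    field_simp
  -- multipliability
  have hM : Multipliable r := by
    apply Complex.multipliable_of_summable_log
    set K := (‖z‖ + ‖a * z‖) * (1 - ‖z‖)⁻¹ with hKdef
    have hK0 : 0 ≤ K := by
      have : (0:ℝ) < 1 - ‖z‖ := by linarith
      positivity
    have hu : ∀ m : ℕ, r m = 1 + (z * q ^ m - a * z * q ^ m) / (1 - z * q ^ m) := by
      intro m
      have hd := hne2 m
      rw [hrdef]
      field_simp
      ring
    have hub : ∀ m : ℕ, ‖(z * q ^ m - a * z * q ^ m) / (1 - z * q ^ m)‖ ≤ K * ‖q‖ ^ m := by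
      intro m
      rw [norm_div]
      have hd : 1 - ‖z‖ ≤ ‖1 - z * q ^ m‖ := by
        refine le_trans ?_ norm_one_sub_ge
        have : ‖z * q ^ m‖ ≤ ‖z‖ := by
          rw [norm_mul]
          calc ‖z‖ * ‖q ^ m‖ ≤ ‖z‖ * 1 := by
                refine mul_le_mul_of_nonneg_left ?_ (norm_nonneg z)
                rw [norm_pow]; exact pow_le_one₀ (norm_nonneg q) hq.le
            _ = ‖z‖ := mul_one _
        linarith
      have hn : ‖z * q ^ m - a * z * q ^ m‖ ≤ (‖z‖ + ‖a * z‖) * ‖q‖ ^ m := by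
        calc ‖z * q ^ m - a * z * q ^ m‖ ≤ ‖z * q ^ m‖ + ‖a * z * q ^ m‖ := norm_sub_le _ _
          _ = (‖z‖ + ‖a * z‖) * ‖q‖ ^ m := by
              rw [norm_mul, norm_mul, norm_pow]; ring
      have hz1 : (0:ℝ) < 1 - ‖z‖ := by linarith
      calc ‖z * q ^ m - a * z * q ^ m‖ / ‖1 - z * q ^ m‖
          ≤ ((‖z‖ + ‖a * z‖) * ‖q‖ ^ m) / (1 - ‖z‖) :=
            div_le_div₀ (by positivity) hn hz1 hd
        _ = K * ‖q‖ ^ m := by rw [hKdef]; ring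
    have htend : Tendsto (fun m : ℕ => K * ‖q‖ ^ m) atTop (𝓝 0) := by
      have := (tendsto_pow_atTop_nhds_zero_of_lt_one (norm_nonneg q) hq).const_mul K
      rwa [mul_zero] at this
    have hev : ∀ᶠ m : ℕ in atTop, K * ‖q‖ ^ m ≤ 1 / 2 :=
      htend.eventually (eventually_le_nhds (by norm_num))
    apply Summable.of_norm
    apply Summable.of_norm_bounded_eventually_nat
      (((summable_geometric_of_lt_one (norm_nonneg q) hq).mul_left K).mul_left (3 / 2))
    filter_upwards [hev] with m hm
    rw [norm_norm, hu m]
    calc ‖Complex.log (1 + (z * q ^ m - a * z * q ^ m) / (1 - z * q ^ m))‖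
        ≤ 3 / 2 * ‖(z * q ^ m - a * z * q ^ m) / (1 - z * q ^ m)‖ :=
          Complex.norm_log_one_add_half_le_self ((hub m).trans hm)
      _ ≤ 3 / 2 * (K * ‖q‖ ^ m) := by linarith [hub m]
  have hfin : ∏' m, r m = f z := tendsto_nhds_unique hM.hasProd.tendsto_prod_nat hPT
  refine ⟨hM, ?_⟩
  rw [hfin]
  exact (hsum z hz).of_norm.hasSum


lemma P_zero (q : ℂ) (n : ℕ) : P q 0 n = 1 := by simp [P]

end QC

open QC

set_option maxHeartbeats 1000000 in
/-- For complex `q, X, Y` with `|q| < 1`, `|X| < 1`, `|Y| < 1`: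
`Σ_{r,s≥0} q^{rs} X^r Y^s /((q;q)_r (q;q)_s) = ∏_{m≥0} (1 - qᵐXY)/((1 - qᵐX)(1 - qᵐY))`;
the double series converges absolutely, as does the infinite product. -/
theorem stmt7 (q X Y : ℂ) (hq : ‖q‖ < 1) (hX : ‖X‖ < 1) (hY : ‖Y‖ < 1) :
    Summable (fun p : ℕ × ℕ =>
      ‖q ^ (p.1 * p.2) * X ^ p.1 * Y ^ p.2 /
        ((∏ k ∈ Finset.Icc 1 p.1, (1 - q ^ k)) * ∏ k ∈ Finset.Icc 1 p.2, (1 - q ^ k))‖) ∧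
    Summable (fun m : ℕ =>
      ‖(1 - q ^ m * (X * Y)) / ((1 - q ^ m * X) * (1 - q ^ m * Y)) - 1‖) ∧
    ∑' p : ℕ × ℕ,
        q ^ (p.1 * p.2) * X ^ p.1 * Y ^ p.2 /
          ((∏ k ∈ Finset.Icc 1 p.1, (1 - q ^ k)) * ∏ k ∈ Finset.Icc 1 p.2, (1 - q ^ k))
      = ∏' m : ℕ, (1 - q ^ m * (X * Y)) / ((1 - q ^ m * X) * (1 - q ^ m * Y)) := by
  have hIcc : ∀ n : ℕ, (∏ k ∈ Finset.Icc 1 n, (1 - q ^ k)) = QC.P q q n := by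
    intro n
    rw [QC.P]
    induction n with
    | zero => simp
    | succ n ih =>
      rw [Finset.prod_Icc_succ_top (Nat.le_add_left 1 n), ih, Finset.prod_range_succ,
        pow_succ']
  obtain ⟨C, hC0, hC⟩ := QC.P_lb hq
  have hqm1 : ∀ m : ℕ, ‖(q:ℂ) ^ m‖ ≤ 1 := fun m => by
    rw [norm_pow]; exact pow_le_one₀ (norm_nonneg q) hq.le
  have hXY : ‖X * Y‖ < 1 := by
    rw [norm_mul]; nlinarith [norm_nonneg X, norm_nonneg Y]
  have hqmX : ∀ m : ℕ, ‖q ^ m * X‖ < 1 := fun m => by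
    rw [norm_mul]; nlinarith [norm_nonneg X, hqm1 m, norm_nonneg (q ^ m)]
  have hqmY : ∀ m : ℕ, ‖q ^ m * Y‖ < 1 := fun m => by
    rw [norm_mul]; nlinarith [norm_nonneg Y, hqm1 m, norm_nonneg (q ^ m)]
  have hneX : ∀ m : ℕ, (1 - q ^ m * X) ≠ 0 := fun m => QC.one_sub_ne (hqmX m)
  have hneY : ∀ m : ℕ, (1 - q ^ m * Y) ≠ 0 := fun m => QC.one_sub_ne (hqmY m)
  -- Part 1 : summability of the double series
  have hsummable : Summable (fun p : ℕ × ℕ =>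
      ‖q ^ (p.1 * p.2) * X ^ p.1 * Y ^ p.2 / (QC.P q q p.1 * QC.P q q p.2)‖) := by
    have hs : Summable (fun p : ℕ × ℕ => (C⁻¹ * ‖X‖ ^ p.1) * (C⁻¹ * ‖Y‖ ^ p.2)) :=
      Summable.mul_of_nonneg ((summable_geometric_of_lt_one (norm_nonneg X) hX).mul_left _)
        ((summable_geometric_of_lt_one (norm_nonneg Y) hY).mul_left _)
        (fun n => by positivity) (fun n => by positivity)
    apply Summable.of_nonneg_of_le (fun p => norm_nonneg _) (fun p => ?_) hs
    rw [norm_div, norm_mul, norm_mul, norm_mul, norm_pow, norm_pow, norm_pow]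
    have h1 : ‖q‖ ^ (p.1 * p.2) ≤ 1 := pow_le_one₀ (norm_nonneg q) hq.le
    have h2 := hC p.1
    have h3 := hC p.2
    calc ‖q‖ ^ (p.1 * p.2) * ‖X‖ ^ p.1 * ‖Y‖ ^ p.2 / (‖QC.P q q p.1‖ * ‖QC.P q q p.2‖)
        ≤ (1 * ‖X‖ ^ p.1 * ‖Y‖ ^ p.2) / (C * C) := by
          apply div_le_div₀ (by positivity) ?_ (by positivity)
            (mul_le_mul h2 h3 hC0.le (norm_nonneg _))
          have hx : (0:ℝ) ≤ ‖X‖ ^ p.1 := by positivity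
          have hy : (0:ℝ) ≤ ‖Y‖ ^ p.2 := by positivity
          exact mul_le_mul_of_nonneg_right (mul_le_mul_of_nonneg_right h1 hx) hy
      _ = C⁻¹ * ‖X‖ ^ p.1 * (C⁻¹ * ‖Y‖ ^ p.2) := by
          field_simp
  -- Part 2 : summability of the product terms
  have hprod2 : Summable (fun m : ℕ =>
      ‖(1 - q ^ m * (X * Y)) / ((1 - q ^ m * X) * (1 - q ^ m * Y)) - 1‖) := by
    have hD0 : (0:ℝ) < (1 - ‖X‖) * (1 - ‖Y‖) := by nlinarith
    apply Summable.of_nonneg_of_le (fun m => norm_nonneg _) (fun m => ?_)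
      (((summable_geometric_of_lt_one (norm_nonneg q) hq).mul_left
        (4 * ((1 - ‖X‖) * (1 - ‖Y‖))⁻¹)))
    have e : (1 - q ^ m * (X * Y)) / ((1 - q ^ m * X) * (1 - q ^ m * Y)) - 1
        = q ^ m * (X + Y - X * Y - q ^ m * (X * Y)) / ((1 - q ^ m * X) * (1 - q ^ m * Y)) := by
      rw [div_sub_one (mul_ne_zero (hneX m) (hneY m))]
      congr 1
      ring
    rw [e, norm_div, norm_mul, norm_mul]
    have hxy : ‖X‖ * ‖Y‖ < 1 := by nlinarith [norm_nonneg X, norm_nonneg Y]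
    have hnum : ‖X + Y - X * Y - q ^ m * (X * Y)‖ ≤ 4 := by
      have b0 : ‖q ^ m * (X * Y)‖ ≤ 1 := by
        rw [norm_mul, norm_mul]
        nlinarith [hqm1 m, norm_nonneg (q ^ m), norm_nonneg X, norm_nonneg Y]
      have b1 : ‖X * Y‖ ≤ 1 := by rw [norm_mul]; nlinarith [norm_nonneg X, norm_nonneg Y]
      calc ‖X + Y - X * Y - q ^ m * (X * Y)‖
          ≤ ‖X + Y - X * Y‖ + ‖q ^ m * (X * Y)‖ := norm_sub_le _ _
        _ ≤ (‖X + Y‖ + ‖X * Y‖) + ‖q ^ m * (X * Y)‖ := by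
            have := norm_sub_le (X + Y) (X * Y); linarith
        _ ≤ 4 := by
            have := norm_add_le X Y; linarith
    have hden : (1 - ‖X‖) * (1 - ‖Y‖) ≤ ‖1 - q ^ m * X‖ * ‖1 - q ^ m * Y‖ := by
      have d1 : 1 - ‖X‖ ≤ ‖1 - q ^ m * X‖ := by
        refine le_trans ?_ QC.norm_one_sub_ge
        rw [norm_mul]
        nlinarith [hqm1 m, norm_nonneg (q ^ m), norm_nonneg X]
      have d2 : 1 - ‖Y‖ ≤ ‖1 - q ^ m * Y‖ := by
        refine le_trans ?_ QC.norm_one_sub_ge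
        rw [norm_mul]
        nlinarith [hqm1 m, norm_nonneg (q ^ m), norm_nonneg Y]
      exact mul_le_mul d1 d2 (by linarith) (norm_nonneg _)
    calc ‖q ^ m‖ * ‖X + Y - X * Y - q ^ m * (X * Y)‖ / (‖1 - q ^ m * X‖ * ‖1 - q ^ m * Y‖)
        ≤ (‖q‖ ^ m * 4) / ((1 - ‖X‖) * (1 - ‖Y‖)) := by
          apply div_le_div₀ (by positivity) ?_ hD0 hden
          rw [norm_pow]
          exact mul_le_mul_of_nonneg_left hnum (by positivity)
      _ = 4 * ((1 - ‖X‖) * (1 - ‖Y‖))⁻¹ * ‖q‖ ^ m := by ring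
  refine ⟨by simpa only [hIcc] using hsummable, hprod2, ?_⟩
  -- Part 3 : the identity
  simp only [hIcc]
  have inner : ∀ r : ℕ,
      Multipliable (fun m : ℕ => (1 - 0 * (q ^ r * Y) * q ^ m) / (1 - (q ^ r * Y) * q ^ m)) ∧
      HasSum (fun s : ℕ => QC.P q 0 s / QC.P q q s * (q ^ r * Y) ^ s)
        (∏' m : ℕ, (1 - 0 * (q ^ r * Y) * q ^ m) / (1 - (q ^ r * Y) * q ^ m)) := fun r =>
    QC.qbinom hq (hqmY r) (by simp)
  set gY : ℕ → ℂ := fun m => (1 - q ^ m * Y)⁻¹ with hgY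
  have hMgY : Multipliable gY := by
    have h := (QC.qbinom hq hY (a := 0) (z := Y) (by simp)).1
    exact h.congr (fun m => by rw [hgY]; simp [one_div, mul_comm])
  have hgYarg : ∀ r m : ℕ, (1 - 0 * (q ^ r * Y) * q ^ m) / (1 - (q ^ r * Y) * q ^ m)
      = gY (m + r) := by
    intro r m
    have harg : (q ^ r * Y) * q ^ m = q ^ (m + r) * Y := by rw [pow_add]; ring
    rw [hgY, zero_mul, zero_mul, sub_zero, one_div, harg]
  have hshift : ∀ r : ℕ, (∏' m : ℕ, gY (m + r))
      = (∏' m : ℕ, gY m) * ∏ i ∈ Finset.range r, (1 - q ^ i * Y) := by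
    intro r
    have hMsh : Multipliable (fun m : ℕ => gY (m + r)) := (inner r).1.congr (hgYarg r)
    have hpne : (∏ i ∈ Finset.range r, gY i) ≠ 0 :=
      Finset.prod_ne_zero_iff.mpr fun i _ => inv_ne_zero (hneY i)
    have hinv : (∏ i ∈ Finset.range r, gY i)⁻¹ = ∏ i ∈ Finset.range r, (1 - q ^ i * Y) := by
      rw [← Finset.prod_inv_distrib]
      exact Finset.prod_congr rfl fun i _ => by rw [hgY, inv_inv]
    have h1 := hMsh.hasProd.tendsto_prod_nat
    have h2 : Tendsto (fun n : ℕ => ∏ m ∈ Finset.range n, gY (m + r)) atTop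
        (𝓝 ((∏' m : ℕ, gY m) * (∏ i ∈ Finset.range r, gY i)⁻¹)) := by
      have h3 : Tendsto (fun n : ℕ => ∏ x ∈ Finset.range (r + n), gY x) atTop
          (𝓝 (∏' m : ℕ, gY m)) :=
        hMgY.hasProd.tendsto_prod_nat.comp
          (tendsto_atTop_mono (fun n => Nat.le_add_left n r) tendsto_id)
      have h4 := h3.mul (tendsto_const_nhds (x := (∏ i ∈ Finset.range r, gY i)⁻¹))
      refine h4.congr fun n => ?_
      rw [Finset.prod_range_add]
      rw [show (∏ x ∈ Finset.range n, gY (r + x)) = ∏ x ∈ Finset.range n, gY (x + r) from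
        Finset.prod_congr rfl fun x _ => by rw [add_comm]]
      rw [mul_comm (∏ x ∈ Finset.range r, gY x), mul_assoc, mul_inv_cancel₀ hpne, mul_one]
    rw [tendsto_nhds_unique h1 h2, hinv]
  have htpr : ∀ r : ℕ, (∏' m : ℕ, (1 - 0 * (q ^ r * Y) * q ^ m) / (1 - (q ^ r * Y) * q ^ m))
      = ∏' m : ℕ, gY (m + r) := by
    intro r
    exact tprod_congr (hgYarg r)
  have hterm : ∀ r s : ℕ, q ^ (r * s) * X ^ r * Y ^ s / (QC.P q q r * QC.P q q s)
      = (X ^ r / QC.P q q r) * (QC.P q 0 s / QC.P q q s * (q ^ r * Y) ^ s) := by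
    intro r s
    have h1 := QC.P_ne_zero hq r
    have h2 := QC.P_ne_zero hq s
    rw [QC.P_zero]
    field_simp
    ring
  have hsum0 : Summable (fun p : ℕ × ℕ =>
      q ^ (p.1 * p.2) * X ^ p.1 * Y ^ p.2 / (QC.P q q p.1 * QC.P q q p.2)) :=
    hsummable.of_norm
  have hinnerS : ∀ r : ℕ, Summable (fun s : ℕ =>
      q ^ (r * s) * X ^ r * Y ^ s / (QC.P q q r * QC.P q q s)) := fun r =>
    ((inner r).2.summable.mul_left (X ^ r / QC.P q q r)).congr fun s => (hterm r s).symm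
  have hstep1 : ∀ r : ℕ, (∑' s : ℕ, q ^ (r * s) * X ^ r * Y ^ s / (QC.P q q r * QC.P q q s))
      = (∏' m : ℕ, gY m) * (QC.P q Y r / QC.P q q r * X ^ r) := by
    intro r
    calc (∑' s : ℕ, q ^ (r * s) * X ^ r * Y ^ s / (QC.P q q r * QC.P q q s))
        = ∑' s : ℕ, (X ^ r / QC.P q q r) * (QC.P q 0 s / QC.P q q s * (q ^ r * Y) ^ s) :=
          tsum_congr fun s => hterm r s
      _ = (X ^ r / QC.P q q r) * ∑' s : ℕ, (QC.P q 0 s / QC.P q q s * (q ^ r * Y) ^ s) :=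
          tsum_mul_left
      _ = (X ^ r / QC.P q q r) *
          ∏' m : ℕ, (1 - 0 * (q ^ r * Y) * q ^ m) / (1 - (q ^ r * Y) * q ^ m) := by
          rw [(inner r).2.tsum_eq]
      _ = (X ^ r / QC.P q q r) *
          ((∏' m : ℕ, gY m) * ∏ i ∈ Finset.range r, (1 - q ^ i * Y)) := by
          rw [htpr r, hshift r]
      _ = (∏' m : ℕ, gY m) * (QC.P q Y r / QC.P q q r * X ^ r) := by
          simp only [QC.P]
          rw [show (∏ i ∈ Finset.range r, (1 - q ^ i * Y))
            = ∏ i ∈ Finset.range r, (1 - Y * q ^ i) from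
            Finset.prod_congr rfl fun i _ => by ring]
          ring
  have hXside := QC.qbinom hq hX (a := Y) (show ‖Y * X‖ < 1 by rw [mul_comm]; exact hXY)
  calc (∑' p : ℕ × ℕ, q ^ (p.1 * p.2) * X ^ p.1 * Y ^ p.2 / (QC.P q q p.1 * QC.P q q p.2))
      = ∑' r : ℕ, ∑' s : ℕ, q ^ (r * s) * X ^ r * Y ^ s / (QC.P q q r * QC.P q q s) :=
        Summable.tsum_prod' hsum0 hinnerS
    _ = ∑' r : ℕ, (∏' m : ℕ, gY m) * (QC.P q Y r / QC.P q q r * X ^ r) :=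
        tsum_congr hstep1
    _ = (∏' m : ℕ, gY m) * ∑' r : ℕ, (QC.P q Y r / QC.P q q r * X ^ r) := tsum_mul_left
    _ = (∏' m : ℕ, gY m) * ∏' m : ℕ, (1 - Y * X * q ^ m) / (1 - X * q ^ m) := by
        rw [hXside.2.tsum_eq]
    _ = ∏' m : ℕ, (gY m * ((1 - Y * X * q ^ m) / (1 - X * q ^ m))) :=
        (Multipliable.tprod_mul hMgY hXside.1).symm
    _ = ∏' m : ℕ, (1 - q ^ m * (X * Y)) / ((1 - q ^ m * X) * (1 - q ^ m * Y)) := by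
        refine tprod_congr fun m => ?_
        have h1 := hneX m
        have h2 := hneY m
        have h3 : (1 - X * q ^ m) ≠ 0 := by rw [mul_comm X (q ^ m)]; exact h1
        rw [hgY]
        field_simp
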